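/- Let f : ℝ^n → ℝ be differentiable and μ-strongly convex with μ > 0. Then its Legendre–Fenchel conjugate f* is differentiable and (1/μ)-smooth, i.e., ‖∇f*(y) − ∇f*(z)‖ ≤ (1/μ)‖y − z‖ for all y, z. -/
import Mathlib

open scoped RealInnerProductSpace
open InnerProductSpace Metric Filter

/-- The Legendre–Fenchel conjugate of `f`. -/
noncomputable def fenchelConj {n : ℕ} (f : EuclideanSpace ℝ (Fin n) → ℝ)
    (y : EuclideanSpace ℝ (Fin n)) : ℝ :=
  ⨆ x : EuclideanSpace ℝ (Fin n), (⟪y, x⟫ - f x)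

theorem conjugate_of_strongly_convex_is_smooth {n : ℕ}
    (f : EuclideanSpace ℝ (Fin n) → ℝ)
    (g : EuclideanSpace ℝ (Fin n) → EuclideanSpace ℝ (Fin n))
    (μ : ℝ) (hμ : 0 < μ)
    (hg : ∀ x, HasGradientAt f (g x) x)
    (hsc : ∀ x y, μ / 2 * ‖y - x‖ ^ 2 ≤ f y - f x - ⟪g x, y - x⟫) :
    ∃ gs : EuclideanSpace ℝ (Fin n) → EuclideanSpace ℝ (Fin n),
      (∀ y, HasGradientAt (fenchelConj f) (gs y) y) ∧
      (∀ y z, ‖gs y - gs z‖ ≤ (1 / μ) * ‖y - z‖) := by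
  -- strong monotonicity of the gradient
  have mono : ∀ x z : EuclideanSpace ℝ (Fin n),
      μ * ‖x - z‖ ^ 2 ≤ ⟪g x - g z, x - z⟫ := by
    intro x z
    have h1 := hsc z x
    have h2 := hsc x z
    have e1 : ⟪g x, z - x⟫ = -⟪g x, x - z⟫ := by
      rw [show z - x = -(x - z) by abel, inner_neg_right]
    have e2 : ⟪g x - g z, x - z⟫ = ⟪g x, x - z⟫ - ⟪g z, x - z⟫ := inner_sub_left _ _ _
    have e3 : ‖z - x‖ = ‖x - z‖ := norm_sub_rev _ _
    rw [e3] at h2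
    linarith
  -- continuity of f
  have hfc : Continuous f :=
    continuous_iff_continuousAt.2 fun x => (hg x).hasFDerivAt.continuousAt
  -- surjectivity of g
  have surj : ∀ y : EuclideanSpace ℝ (Fin n), ∃ x, g x = y := by
    intro y
    set φ : EuclideanSpace ℝ (Fin n) → ℝ := fun x => ⟪y, x⟫ - f x with hφdef
    have hφc : Continuous φ := (continuous_const.inner continuous_id).sub hfc
    clear_value φ
    have key : ∀ x : EuclideanSpace ℝ (Fin n),
        φ x ≤ ‖y - g 0‖ * ‖x‖ - f 0 - μ / 2 * ‖x‖ ^ 2 := by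
      intro x
      have h1 := hsc 0 x
      simp only [sub_zero] at h1
      have h2 : ⟪y - g 0, x⟫ ≤ ‖y - g 0‖ * ‖x‖ := real_inner_le_norm _ _
      have h3 : ⟪y - g 0, x⟫ = ⟪y, x⟫ - ⟪g 0, x⟫ := inner_sub_left _ _ _
      simp only [hφdef]
      linarith
    set R : ℝ := 2 * ‖y - g 0‖ / μ + 1 with hRdef
    have hR : 0 < R := by rw [hRdef]; positivity
    have hμR : μ * R = 2 * ‖y - g 0‖ + μ := by rw [hRdef]; field_simp
    clear_value R
    obtain ⟨x₀, hx₀mem, hx₀max⟩ :=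
      (isCompact_closedBall (0 : EuclideanSpace ℝ (Fin n)) R).exists_isMaxOn
      ⟨0, by simp [hR.le]⟩ hφc.continuousOn
    have hφ0 : φ 0 = -f 0 := by simp [hφdef]
    have hglob : ∀ x, φ x ≤ φ x₀ := by
      intro x
      by_cases hx : x ∈ closedBall (0 : EuclideanSpace ℝ (Fin n)) R
      · exact hx₀max hx
      · have hxR : R < ‖x‖ := by
          simpa [dist_eq_norm] using hx
        have h0le : φ 0 ≤ φ x₀ := hx₀max (by simp [hR.le])
        have hk := key x
        have hb2 : 2 * ‖y - g 0‖ < ‖x‖ * μ := by nlinarith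
        have hxpos : (0 : ℝ) < ‖x‖ := by linarith
        have : ‖y - g 0‖ * ‖x‖ - μ / 2 * ‖x‖ ^ 2 < 0 := by nlinarith
        linarith
    have hloc : IsLocalMax φ x₀ := Eventually.of_forall hglob
    have hder : HasFDerivAt φ
        ((toDual ℝ (EuclideanSpace ℝ (Fin n)) y : EuclideanSpace ℝ (Fin n) →L[ℝ] ℝ) -
          toDual ℝ (EuclideanSpace ℝ (Fin n)) (g x₀)) x₀ := by
      have h1 : HasFDerivAt (fun x : EuclideanSpace ℝ (Fin n) => ⟪y, x⟫)
          (toDual ℝ (EuclideanSpace ℝ (Fin n)) y : EuclideanSpace ℝ (Fin n) →L[ℝ] ℝ) x₀ :=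
        (toDual ℝ (EuclideanSpace ℝ (Fin n)) y).hasFDerivAt.congr_of_eventuallyEq
          (Eventually.of_forall fun z => (toDual_apply_apply).symm)
      rw [hφdef]
      exact h1.sub (hg x₀).hasFDerivAt
    have hzero := hloc.hasFDerivAt_eq_zero hder
    refine ⟨x₀, ?_⟩
    have happ := congrArg
      (fun (L : EuclideanSpace ℝ (Fin n) →L[ℝ] ℝ) => L (y - g x₀)) hzero
    simp only [ContinuousLinearMap.sub_apply, ContinuousLinearMap.zero_apply,
      toDual_apply_apply] at happ
    have hin : ⟪y - g x₀, y - g x₀⟫ = 0 := by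
      rw [inner_sub_left]; linarith
    have h0 : y - g x₀ = 0 := by rwa [inner_self_eq_zero] at hin
    exact (sub_eq_zero.mp h0).symm
  set gs : EuclideanSpace ℝ (Fin n) → EuclideanSpace ℝ (Fin n) :=
    fun y => (surj y).choose with hgsdef
  have hgs : ∀ y, g (gs y) = y := fun y => (surj y).choose_spec
  -- gs y maximizes
  have hmax : ∀ y x : EuclideanSpace ℝ (Fin n),
      ⟪y, x⟫ - f x ≤ ⟪y, gs y⟫ - f (gs y) := by
    intro y x
    have h1 := hsc (gs y) x
    rw [hgs] at h1
    have h2 : ⟪y, x - gs y⟫ = ⟪y, x⟫ - ⟪y, gs y⟫ := inner_sub_right _ _ _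
    nlinarith [sq_nonneg ‖x - gs y‖, hμ]
  have hF : ∀ y : EuclideanSpace ℝ (Fin n),
      fenchelConj f y = ⟪y, gs y⟫ - f (gs y) := by
    intro y
    refine le_antisymm (ciSup_le (hmax y)) ?_
    exact le_ciSup ⟨⟪y, gs y⟫ - f (gs y), by rintro _ ⟨x, rfl⟩; exact hmax y x⟩ (gs y)
  have hLip : ∀ y z : EuclideanSpace ℝ (Fin n), ‖gs y - gs z‖ ≤ 1 / μ * ‖y - z‖ := by
    intro y z
    have h1 := mono (gs y) (gs z)
    rw [hgs, hgs] at h1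
    have h2 : ⟪y - z, gs y - gs z⟫ ≤ ‖y - z‖ * ‖gs y - gs z‖ := real_inner_le_norm _ _
    by_cases h0 : gs y - gs z = 0
    · rw [h0, norm_zero]; positivity
    · have hpos : 0 < ‖gs y - gs z‖ := norm_pos_iff.2 h0
      have h3 : μ * ‖gs y - gs z‖ ≤ ‖y - z‖ := by nlinarith
      rw [div_mul_eq_mul_div, one_mul, le_div_iff₀ hμ]
      nlinarith
  refine ⟨gs, ?_, hLip⟩
  intro y
  rw [hasGradientAt_iff_isLittleO, Asymptotics.isLittleO_iff]
  intro c hc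
  have key : ∀ z : EuclideanSpace ℝ (Fin n),
      |fenchelConj f z - fenchelConj f y - ⟪gs y, z - y⟫| ≤ 1 / μ * ‖z - y‖ ^ 2 := by
    intro z
    have hFz := hF z
    have hFy := hF y
    have hlow : ⟪z, gs y⟫ - f (gs y) ≤ fenchelConj f z := by rw [hFz]; exact hmax z (gs y)
    have hup : ⟪y, gs z⟫ - f (gs z) ≤ fenchelConj f y := by rw [hFy]; exact hmax y (gs z)
    have e1 : ⟪gs y, z - y⟫ = ⟪z, gs y⟫ - ⟪y, gs y⟫ := by
      rw [real_inner_comm, inner_sub_left]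
    have e2 : ⟪z - y, gs z - gs y⟫ =
        (⟪z, gs z⟫ - ⟪y, gs z⟫) - (⟪z, gs y⟫ - ⟪y, gs y⟫) := by
      rw [inner_sub_right, inner_sub_left, inner_sub_left]
    have h4 : ⟪z - y, gs z - gs y⟫ ≤ ‖z - y‖ * ‖gs z - gs y‖ := real_inner_le_norm _ _
    have h5 : ‖gs z - gs y‖ ≤ 1 / μ * ‖z - y‖ := hLip z y
    have hnn : (0 : ℝ) ≤ 1 / μ * ‖z - y‖ ^ 2 := by positivity
    rw [abs_le]
    constructor
    · linarith
    · nlinarith [norm_nonneg (z - y)]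
  have hev : ∀ᶠ z in nhds y, ‖z - y‖ < c * μ := by
    filter_upwards [Metric.ball_mem_nhds y (mul_pos hc hμ)] with z hz
    rwa [Metric.mem_ball, dist_eq_norm] at hz
  filter_upwards [hev] with z hz
  rw [Real.norm_eq_abs]
  have hk := key z
  have h3 : 1 / μ * ‖z - y‖ ^ 2 ≤ c * ‖z - y‖ := by
    rw [div_mul_eq_mul_div, one_mul, div_le_iff₀ hμ]
    nlinarith [norm_nonneg (z - y)]
  calc |fenchelConj f z - fenchelConj f y - ⟪gs y, z - y⟫| ≤ 1 / μ * ‖z - y‖ ^ 2 := hk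
    _ ≤ c * ‖z - y‖ := h3
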